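/- Let Z ∈ ℂ^{M×d}, T_D ∈ ℂ^{N×d}. Over all RS analog beamformers T_RF (each row exactly one unit-modulus nonzero entry), the minimum of ‖Z − T_RF T_D‖_F² is attained by independently choosing, for each row m, the column n*(m) = argmax_n |Z(m,:)T_D(n,:)^H| and phase φ = arg(Z(m,:)T_D(n*(m),:)^H); the resulting minimum equals ‖Z‖² + Σ_m (‖T_D(n*(m),:)‖² − 2|Z(m,:)T_D(n*(m),:)^H|) when all rows of T_D have equal norm. -/

import Mathlib

open Matrix

/-- Row-`m`, column-`n` complex coefficient `ζ_{m,n} = Z(m,:) T_D(n,:)^H`. -/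
noncomputable def zeta {M N d : ℕ} (Z : Matrix (Fin M) (Fin d) ℂ) (TD : Matrix (Fin N) (Fin d) ℂ)
    (m : Fin M) (n : Fin N) : ℂ :=
  ∑ j, Z m j * (starRingEnd ℂ) (TD n j)

/-- Squared Frobenius norm of `Z − T_RF T_D`. -/
noncomputable def objRS {M N d : ℕ} (Z : Matrix (Fin M) (Fin d) ℂ) (TD : Matrix (Fin N) (Fin d) ℂ)
    (TRF : Matrix (Fin M) (Fin N) ℂ) : ℝ :=
  ∑ m, ∑ j, ‖(Z - TRF * TD) m j‖ ^ 2

lemma termExpand (a b c : ℂ) :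
    ‖a - c * b‖ ^ 2 = ‖a‖ ^ 2 + ‖c‖ ^ 2 * ‖b‖ ^ 2
      - 2 * ((starRingEnd ℂ) c * (a * (starRingEnd ℂ) b)).re := by
  simp only [Complex.sq_norm, Complex.normSq_sub, Complex.normSq_mul]
  have : (a * (starRingEnd ℂ) (c * b)).re = ((starRingEnd ℂ) c * (a * (starRingEnd ℂ) b)).re := by
    rw [_root_.map_mul]; ring_nf
  rw [this]

lemma rowExpand {d : ℕ} (a b : Fin d → ℂ) (c : ℂ) :
    ∑ j, ‖a j - c * b j‖ ^ 2
      = ∑ j, ‖a j‖ ^ 2 + ‖c‖ ^ 2 * ∑ j, ‖b j‖ ^ 2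
        - 2 * ((starRingEnd ℂ) c * ∑ j, a j * (starRingEnd ℂ) (b j)).re := by
  simp only [termExpand, Finset.sum_sub_distrib, Finset.sum_add_distrib, Finset.mul_sum,
    Complex.re_sum, ← Finset.sum_mul]

lemma rowCost {M N d : ℕ} (Z : Matrix (Fin M) (Fin d) ℂ) (TD : Matrix (Fin N) (Fin d) ℂ)
    (TRF : Matrix (Fin M) (Fin N) ℂ) (m : Fin M) (n : Fin N) (c : ℂ)
    (h : ∀ n', TRF m n' = if n' = n then c else 0) :
    ∑ j, ‖(Z - TRF * TD) m j‖ ^ 2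
      = ∑ j, ‖Z m j‖ ^ 2 + ‖c‖ ^ 2 * ∑ j, ‖TD n j‖ ^ 2
        - 2 * ((starRingEnd ℂ) c * zeta Z TD m n).re := by
  have key : ∀ j, (Z - TRF * TD) m j = Z m j - c * TD n j := by
    intro j
    simp only [Matrix.sub_apply, Matrix.mul_apply, h]
    congr 1
    simp [ite_mul]
  simp only [key]
  exact rowExpand _ _ _

lemma optPhase (ζ : ℂ) :
    ((starRingEnd ℂ) (Complex.exp ((ζ.arg : ℂ) * Complex.I)) * ζ).re = ‖ζ‖ := by
  nth_rewrite 2 [← Complex.norm_mul_exp_arg_mul_I ζ]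
  rw [show (starRingEnd ℂ) (Complex.exp ((ζ.arg : ℂ) * Complex.I)) *
      ((‖ζ‖ : ℂ) * Complex.exp ((ζ.arg : ℂ) * Complex.I))
      = (‖ζ‖ : ℂ) * (Complex.exp ((ζ.arg : ℂ) * Complex.I) *
        (starRingEnd ℂ) (Complex.exp ((ζ.arg : ℂ) * Complex.I))) by ring]
  rw [Complex.mul_conj]
  have h1 : Complex.normSq (Complex.exp ((ζ.arg : ℂ) * Complex.I)) = 1 := by
    rw [← Complex.sq_norm, Complex.norm_exp_ofReal_mul_I]; norm_num
  rw [h1]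
  simp

theorem stmt_12 (M N d : ℕ) (Z : Matrix (Fin M) (Fin d) ℂ)
    (TD : Matrix (Fin N) (Fin d) ℂ)
    (hEq : ∀ n n' : Fin N, ∑ j, ‖TD n j‖ ^ 2 = ∑ j, ‖TD n' j‖ ^ 2)
    (nstar : Fin M → Fin N)
    (hstar : ∀ m n, ‖zeta Z TD m n‖ ≤ ‖zeta Z TD m (nstar m)‖) :
    let TRFstar : Matrix (Fin M) (Fin N) ℂ := Matrix.of fun m n =>
      if n = nstar m then Complex.exp ((zeta Z TD m (nstar m)).arg * Complex.I) else 0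
    (∀ TRF : Matrix (Fin M) (Fin N) ℂ,
        (∀ m, ∃! n, TRF m n ≠ 0) → (∀ m n, TRF m n ≠ 0 → ‖TRF m n‖ = 1) →
        objRS Z TD TRFstar ≤ objRS Z TD TRF) ∧
    objRS Z TD TRFstar
      = ∑ m, ∑ j, ‖Z m j‖ ^ 2
        + ∑ m, (∑ j, ‖TD (nstar m) j‖ ^ 2 - 2 * ‖zeta Z TD m (nstar m)‖) := by
  intro TRFstar
  have hrowstar : ∀ m n', TRFstar m n' =
      if n' = nstar m then Complex.exp (((zeta Z TD m (nstar m)).arg : ℂ) * Complex.I) else 0 :=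
    fun m n' => rfl
  have hstarcost : ∀ m, ∑ j, ‖(Z - TRFstar * TD) m j‖ ^ 2
      = ∑ j, ‖Z m j‖ ^ 2 + (∑ j, ‖TD (nstar m) j‖ ^ 2 - 2 * ‖zeta Z TD m (nstar m)‖) := by
    intro m
    rw [rowCost Z TD TRFstar m (nstar m) _ (hrowstar m), optPhase]
    have h1 : ‖Complex.exp (((zeta Z TD m (nstar m)).arg : ℂ) * Complex.I)‖ = 1 := by
      rw [Complex.norm_exp_ofReal_mul_I]
    rw [h1]; ring
  constructor
  · intro TRF huniq hnorm
    unfold objRS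
    apply Finset.sum_le_sum
    intro m _
    obtain ⟨n₀, hn₀, hun⟩ := huniq m
    have hrow : ∀ n', TRF m n' = if n' = n₀ then TRF m n₀ else 0 := by
      intro n'
      by_cases h : n' = n₀
      · subst h; simp
      · simp only [h, if_false]
        by_contra hne
        exact h (hun n' hne)
    have hc1 : ‖TRF m n₀‖ = 1 := hnorm m n₀ hn₀
    rw [hstarcost m, rowCost Z TD TRF m n₀ _ hrow, hc1, hEq n₀ (nstar m)]
    have hre : ((starRingEnd ℂ) (TRF m n₀) * zeta Z TD m n₀).re
        ≤ ‖zeta Z TD m (nstar m)‖ := by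
      calc ((starRingEnd ℂ) (TRF m n₀) * zeta Z TD m n₀).re
          ≤ ‖(starRingEnd ℂ) (TRF m n₀) * zeta Z TD m n₀‖ := by
            exact Complex.re_le_norm _
        _ = ‖TRF m n₀‖ * ‖zeta Z TD m n₀‖ := by
            rw [norm_mul, RCLike.norm_conj]
        _ = ‖zeta Z TD m n₀‖ := by rw [hc1, one_mul]
        _ ≤ ‖zeta Z TD m (nstar m)‖ := hstar m n₀
    nlinarith [hre]
  · unfold objRS
    simp only [hstarcost]
    rw [Finset.sum_add_distrib]
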